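/- Let γ = [[A, C],[Cᵀ, A]] be a real symmetric matrix with A symmetric and C antisymmetric, and suppose γ ≥ γ_A ⊕ γ_B for CMs γ_A, γ_B of the same size as A. Then γ ≥ γ̃ ⊕ γ̃ where γ̃ := (γ_A + γ_B)/2 is a CM. -/

import Mathlib

open Matrix
open scoped Classical ComplexOrder

noncomputable section

/-- Embed a real matrix into the complex matrices. -/
def toC {k l : ℕ} (A : Matrix (Fin k) (Fin l) ℝ) : Matrix (Fin k) (Fin l) ℂ :=
  A.map Complex.ofReal

/-- The standard symplectic form `Jₙ = ⊕ₖ [[0,-1],[1,0]]` on `ℝ^{2n}`. -/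
def J (n : ℕ) : Matrix (Fin (2*n)) (Fin (2*n)) ℝ :=
  Matrix.of fun i j =>
    if i.val + 1 = j.val ∧ i.val % 2 = 0 then -1
    else if j.val + 1 = i.val ∧ j.val % 2 = 0 then 1 else 0

/-- A correlation matrix (CM): a real symmetric `2n×2n` matrix with `γ - iJₙ ≥ 0`. -/
def IsCM {n : ℕ} (γ : Matrix (Fin (2*n)) (Fin (2*n)) ℝ) : Prop :=
  γ.IsSymm ∧ (toC γ - Complex.I • toC (J n)).PosSemidef

/-- The operator norm (largest singular value) of a real matrix. -/
def opNorm {n m : ℕ} (C : Matrix (Fin n) (Fin m) ℝ) : ℝ :=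
  ‖(Matrix.toEuclideanLin (𝕜 := ℝ) C).toContinuousLinearMap‖

/-- The square root of a positive semidefinite matrix, as `Matrix.PosSemidef.sqrt` was defined
in the older Mathlib (removed since). -/
def psdSqrt {𝕜 : Type*} [RCLike 𝕜] {k : ℕ} {M : Matrix (Fin k) (Fin k) 𝕜} (hM : M.PosSemidef) :
    Matrix (Fin k) (Fin k) 𝕜 :=
  hM.isHermitian.eigenvectorUnitary.1 * diagonal ((↑) ∘ (√·) ∘ hM.isHermitian.eigenvalues) *
    (star hM.isHermitian.eigenvectorUnitary : Matrix (Fin k) (Fin k) 𝕜)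

/-- The trace norm (sum of singular values) of a real square matrix. -/
def trNorm {k : ℕ} (A : Matrix (Fin k) (Fin k) ℝ) : ℝ :=
  (psdSqrt (Matrix.posSemidef_conjTranspose_mul_self A)).trace

/-- The trace norm of a complex square matrix. -/
def trNormC {k : ℕ} (A : Matrix (Fin k) (Fin k) ℂ) : ℝ :=
  ((psdSqrt (Matrix.posSemidef_conjTranspose_mul_self A)).trace).re

/-- The Moore–Penrose pseudoinverse of a real matrix. -/
def pinvR {n m : ℕ} (A : Matrix (Fin n) (Fin m) ℝ) : Matrix (Fin m) (Fin n) ℝ :=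
  if h : ∃ B : Matrix (Fin m) (Fin n) ℝ,
      A * B * A = A ∧ B * A * B = B ∧ (A * B)ᵀ = A * B ∧ (B * A)ᵀ = B * A
  then h.choose else 0

/-- The Moore–Penrose pseudoinverse of a complex matrix. -/
def pinvC {n m : ℕ} (A : Matrix (Fin n) (Fin m) ℂ) : Matrix (Fin m) (Fin n) ℂ :=
  if h : ∃ B : Matrix (Fin m) (Fin n) ℂ,
      A * B * A = A ∧ B * A * B = B ∧ (A * B)ᴴ = A * B ∧ (B * A)ᴴ = B * A
  then h.choose else 0

/-- Real part of a complex matrix. -/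
def reM {k l : ℕ} (X : Matrix (Fin k) (Fin l) ℂ) : Matrix (Fin k) (Fin l) ℝ :=
  Matrix.of fun i j => (X i j).re

/-- Imaginary part of a complex matrix. -/
def imM {k l : ℕ} (X : Matrix (Fin k) (Fin l) ℂ) : Matrix (Fin k) (Fin l) ℝ :=
  Matrix.of fun i j => (X i j).im

lemma psd_smul_R {k : Type*} [Fintype k] {c : ℝ} (hc : 0 ≤ c) {M : Matrix k k ℝ}
    (h : M.PosSemidef) : (c • M).PosSemidef := by
  rw [Matrix.posSemidef_iff_dotProduct_mulVec] at h ⊢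
  refine ⟨?_, fun x => ?_⟩
  · rw [Matrix.IsHermitian, conjTranspose_smul, star_trivial, h.1]
  · rw [smul_mulVec, dotProduct_smul, smul_eq_mul]
    exact mul_nonneg hc (h.2 x)

lemma psd_smul_C {k : Type*} [Fintype k] {c : ℝ} (hc : 0 ≤ c) {M : Matrix k k ℂ}
    (h : M.PosSemidef) : ((c : ℂ) • M).PosSemidef := by
  rw [Matrix.posSemidef_iff_dotProduct_mulVec] at h ⊢
  refine ⟨?_, fun x => ?_⟩
  · simp [Matrix.IsHermitian, conjTranspose_smul, h.1.eq, Complex.star_def,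
      Complex.conj_ofReal]
  · rw [smul_mulVec, dotProduct_smul, smul_eq_mul]
    exact mul_nonneg (by exact_mod_cast hc) (h.2 x)

/-- Corollary 1: for symmetric `γ = [[A,C],[Cᵀ,A]]` with
`γ ≥ γ_A ⊕ γ_B`, also `γ ≥ γ̃ ⊕ γ̃` with `γ̃ = (γ_A + γ_B)/2` a CM. -/
theorem corollary1 {n : ℕ} (A C γA γB : Matrix (Fin (2*n)) (Fin (2*n)) ℝ)
    (hA : A.IsSymm) (hC : Cᵀ = -C) (hγA : IsCM γA) (hγB : IsCM γB)
    (hsep : (Matrix.fromBlocks A C Cᵀ A - Matrix.fromBlocks γA 0 0 γB).PosSemidef) :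
    IsCM ((2 : ℝ)⁻¹ • (γA + γB)) ∧
    (Matrix.fromBlocks A C Cᵀ A -
      Matrix.fromBlocks ((2 : ℝ)⁻¹ • (γA + γB)) 0 0 ((2 : ℝ)⁻¹ • (γA + γB))).PosSemidef := by
  constructor
  · constructor
    · simp [Matrix.IsSymm, transpose_smul, transpose_add, hγA.1.eq, hγB.1.eq]
    · have key : toC ((2 : ℝ)⁻¹ • (γA + γB)) - Complex.I • toC (J n)
          = (((2:ℝ)⁻¹ : ℝ) : ℂ) • ((toC γA - Complex.I • toC (J n))
            + (toC γB - Complex.I • toC (J n))) := by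
        ext i j
        simp [toC, Matrix.sub_apply, Matrix.add_apply, Matrix.smul_apply, smul_eq_mul,
          Matrix.map_apply]
        push_cast
        ring
      rw [key]
      exact psd_smul_C (by norm_num) (hγA.2.add hγB.2)
  · set M := Matrix.fromBlocks A C Cᵀ A - Matrix.fromBlocks γA 0 0 γB with hM
    set T : Matrix (Fin (2*n) ⊕ Fin (2*n)) (Fin (2*n) ⊕ Fin (2*n)) ℝ :=
      Matrix.fromBlocks 0 (-1) 1 0 with hT
    have hN : (T * M * Tᴴ).PosSemidef := hsep.mul_mul_conjTranspose_same T
    have hTM : T * M * Tᴴ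
        = Matrix.fromBlocks A C Cᵀ A - Matrix.fromBlocks γB 0 0 γA := by
      have hTH : Tᴴ = Matrix.fromBlocks 0 1 (-1) 0 := by
        ext (i | i) (j | j) <;> simp [hT, Matrix.conjTranspose_apply, Matrix.one_apply, eq_comm]
      rw [hTH, hM, mul_sub, sub_mul]
      congr 1
      · simp [hT, Matrix.fromBlocks_multiply, hC, hA.eq]
      · simp [hT, Matrix.fromBlocks_multiply]
    have key : Matrix.fromBlocks A C Cᵀ A -
        Matrix.fromBlocks ((2 : ℝ)⁻¹ • (γA + γB)) 0 0 ((2 : ℝ)⁻¹ • (γA + γB))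
        = (2 : ℝ)⁻¹ • (M + T * M * Tᴴ) := by
      rw [hTM, hM]
      ext (i | i) (j | j) <;>
        simp [Matrix.sub_apply, Matrix.add_apply, Matrix.smul_apply, smul_eq_mul] <;> ring
    rw [key]
    exact psd_smul_R (by norm_num) (hsep.add hN)
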